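/- arXiv:2507.03889 — 4 statements merged into one kernel-verified Lean document; each statement's English description precedes it below -/
import Mathlib

section
/- Let n ≥ 3 and let G = C_{n,n} be the crown graph on vertex set {1,...,2n}. If T ⊆ [2n] satisfies |X \ T| ≥ 2, |Y \ T| ≥ 2, and |X \ T| + |Y \ T| ≥ 5, where X is the set of odd vertices and Y the set of even vertices, then the induced subgraph of G on the complement of T is connected. -/
open SimpleGraph

/-- The crown graph `C_{n,n}`: vertices `Fin (2*n)`, where index `2i-2` plays the role of the
odd-labelled vertex `2i-1` of the paper and index `2i-1` the even-labelled vertex `2i`.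
An even index `u` and an odd index `v` are adjacent iff `v ≠ u + 1`. -/
def crownGraph (n : ℕ) : SimpleGraph (Fin (2 * n)) where
  Adj u v := (u.val % 2 = 0 ∧ v.val % 2 = 1 ∧ v.val ≠ u.val + 1) ∨
             (v.val % 2 = 0 ∧ u.val % 2 = 1 ∧ u.val ≠ v.val + 1)
  symm := ⟨by intro u v h; tauto⟩
  loopless := ⟨by intro u h; rcases h with ⟨h1, h2, _⟩ | ⟨h1, h2, _⟩ <;> omega⟩

/-- The part `X` (odd-labelled vertices of the paper): even indices. -/
def crownX (n : ℕ) : Finset (Fin (2 * n)) := Finset.univ.filter (fun u => u.val % 2 = 0)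

/-- The part `Y` (even-labelled vertices of the paper): odd indices. -/
def crownY (n : ℕ) : Finset (Fin (2 * n)) := Finset.univ.filter (fun u => u.val % 2 = 1)

theorem crown_induced_connected (n : ℕ) (hn : 3 ≤ n) (T : Finset (Fin (2 * n)))
    (hX : 2 ≤ (crownX n \ T).card) (hY : 2 ≤ (crownY n \ T).card)
    (hXY : 5 ≤ (crownX n \ T).card + (crownY n \ T).card) :
    ((crownGraph n).induce ((↑T : Set (Fin (2 * n)))ᶜ)).Connected := by
  classical
  set S : Set (Fin (2 * n)) := (↑T : Set (Fin (2 * n)))ᶜ with hSdef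
  have memS : ∀ z : Fin (2 * n), z ∈ crownX n \ T ∨ z ∈ crownY n \ T → z ∈ S := by
    intro z hz
    rcases hz with h | h <;>
      · simp only [Finset.mem_sdiff] at h
        simpa [hSdef] using h.2
  have memX : ∀ z : Fin (2 * n), z ∈ crownX n \ T → z.val % 2 = 0 ∧ z ∈ S := by
    intro z hz
    have h2 := memS z (Or.inl hz)
    simp only [crownX, Finset.mem_sdiff, Finset.mem_filter] at hz
    exact ⟨hz.1.2, h2⟩
  have memY : ∀ z : Fin (2 * n), z ∈ crownY n \ T → z.val % 2 = 1 ∧ z ∈ S := by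
    intro z hz
    have h2 := memS z (Or.inr hz)
    simp only [crownY, Finset.mem_sdiff, Finset.mem_filter] at hz
    exact ⟨hz.1.2, h2⟩
  have memX' : ∀ z : Fin (2 * n), z.val % 2 = 0 → z ∈ S → z ∈ crownX n \ T := by
    intro z h1 h2
    simp only [crownX, Finset.mem_sdiff, Finset.mem_filter, Finset.mem_univ, true_and]
    exact ⟨h1, by simpa [hSdef] using h2⟩
  have memY' : ∀ z : Fin (2 * n), z.val % 2 = 1 → z ∈ S → z ∈ crownY n \ T := by
    intro z h1 h2
    simp only [crownY, Finset.mem_sdiff, Finset.mem_filter, Finset.mem_univ, true_and]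
    exact ⟨h1, by simpa [hSdef] using h2⟩
  -- adjacency in the induced graph
  have iadj : ∀ (u v : Fin (2 * n)) (hu : u ∈ S) (hv : v ∈ S),
      u.val % 2 = 0 → v.val % 2 = 1 → v.val ≠ u.val + 1 →
      ((crownGraph n).induce S).Adj ⟨u, hu⟩ ⟨v, hv⟩ := by
    intro u v hu hv h1 h2 h3
    exact Or.inl ⟨h1, h2, h3⟩
  -- existence of a third element
  have third : ∀ (s : Finset (Fin (2 * n))) (a b : Fin (2 * n)), 3 ≤ s.card →
      ∃ z ∈ s, z ≠ a ∧ z ≠ b := by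
    intro s a b hs
    by_contra h
    push_neg at h
    have hsub : s ⊆ {a, b} := by
      intro z hz
      rcases h z hz with h1
      by_cases hza : z = a
      · simp [hza]
      · simp [h1 hza]
    have := Finset.card_le_card hsub
    have h2 : ({a, b} : Finset (Fin (2 * n))).card ≤ 2 :=
      (Finset.card_insert_le _ _).trans (by simp)
    omega
  -- key reachability lemma: even ↝ odd
  have key : ∀ (x y : Fin (2 * n)) (hx : x ∈ S) (hy : y ∈ S),
      x.val % 2 = 0 → y.val % 2 = 1 →
      ((crownGraph n).induce S).Reachable ⟨x, hx⟩ ⟨y, hy⟩ := by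
    intro x y hx hy hx2 hy2
    by_cases hcase : y.val = x.val + 1
    · -- x and y are partners; go around
      obtain ⟨x', hx'mem, hx'ne⟩ :=
        Finset.exists_mem_ne (by omega : 1 < (crownX n \ T).card) x
      obtain ⟨y', hy'mem, hy'ne⟩ :=
        Finset.exists_mem_ne (by omega : 1 < (crownY n \ T).card) y
      obtain ⟨hx'2, hx'S⟩ := memX x' hx'mem
      obtain ⟨hy'2, hy'S⟩ := memY y' hy'mem
      have hx'v : x'.val ≠ x.val := fun h => hx'ne (Fin.ext h)
      have hy'v : y'.val ≠ y.val := fun h => hy'ne (Fin.ext h)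
      by_cases h' : y'.val = x'.val + 1
      · -- need a third vertex on some side
        by_cases h3 : 3 ≤ (crownX n \ T).card
        · obtain ⟨x'', hx''mem, hne1, hne2⟩ := third _ x x' h3
          obtain ⟨hx''2, hx''S⟩ := memX x'' hx''mem
          have hv1 : x''.val ≠ x.val := fun h => hne1 (Fin.ext h)
          have hv2 : x''.val ≠ x'.val := fun h => hne2 (Fin.ext h)
          have a1 := iadj x y' hx hy'S hx2 hy'2 (by omega)
          have a2 := iadj x'' y' hx''S hy'S hx''2 hy'2 (by omega)
          have a3 := iadj x'' y hx''S hy hx''2 hy2 (by omega)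
          exact (a1.reachable.trans a2.symm.reachable).trans a3.reachable
        · have h3' : 3 ≤ (crownY n \ T).card := by omega
          obtain ⟨y'', hy''mem, hne1, hne2⟩ := third _ y y' h3'
          obtain ⟨hy''2, hy''S⟩ := memY y'' hy''mem
          have hv1 : y''.val ≠ y.val := fun h => hne1 (Fin.ext h)
          have hv2 : y''.val ≠ y'.val := fun h => hne2 (Fin.ext h)
          have a1 := iadj x y'' hx hy''S hx2 hy''2 (by omega)
          have a2 := iadj x' y'' hx'S hy''S hx'2 hy''2 (by omega)
          have a3 := iadj x' y hx'S hy hx'2 hy2 (by omega)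
          exact (a1.reachable.trans a2.symm.reachable).trans a3.reachable
      · have a1 := iadj x y' hx hy'S hx2 hy'2 (by omega)
        have a2 := iadj x' y' hx'S hy'S hx'2 hy'2 (by omega)
        have a3 := iadj x' y hx'S hy hx'2 hy2 (by omega)
        exact (a1.reachable.trans a2.symm.reachable).trans a3.reachable
    · exact (iadj x y hx hy hx2 hy2 hcase).reachable
  obtain ⟨x0, hx0⟩ := Finset.card_pos.mp (by omega : 0 < (crownX n \ T).card)
  obtain ⟨y0, hy0⟩ := Finset.card_pos.mp (by omega : 0 < (crownY n \ T).card)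
  obtain ⟨hx02, hx0S⟩ := memX x0 hx0
  obtain ⟨hy02, hy0S⟩ := memY y0 hy0
  have hne : Nonempty S := ⟨⟨x0, hx0S⟩⟩
  refine ⟨?_⟩
  intro a b
  obtain ⟨av, haS⟩ := a
  obtain ⟨bv, hbS⟩ := b
  rcases Nat.mod_two_eq_zero_or_one av.val with ha2 | ha2 <;>
    rcases Nat.mod_two_eq_zero_or_one bv.val with hb2 | hb2
  · exact (key av y0 haS hy0S ha2 hy02).trans (key bv y0 hbS hy0S hb2 hy02).symm
  · exact key av bv haS hbS ha2 hb2
  · exact (key bv av hbS haS hb2 ha2).symm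
  · exact ((key x0 av hx0S haS hx02 ha2).symm).trans (key x0 bv hx0S hbS hx02 hb2)
end

section
/- Let n ≥ 3 and G = C_{n,n}, with X the odd vertices and Y the even vertices. A nonempty subset T ⊆ X has the cut point property if and only if T = X or T = X \ {2i-1} for some i ∈ [n]. -/
open SimpleGraph

/-- Number of connected components of the induced subgraph on `s`. -/
noncomputable def numComponents {V : Type*} (G : SimpleGraph V) (s : Set V) : ℕ :=
  Nat.card (G.induce s).ConnectedComponent


/-- `T` has the cut point property: `T = ∅` or each `i ∈ T` is a cut vertex of the induced
subgraph on `Tᶜ ∪ {i}`, i.e. removing `i` increases the number of connected components. -/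
def cutPointProperty {V : Type*} (G : SimpleGraph V) (T : Set V) : Prop :=
  T = ∅ ∨ ∀ i ∈ T, numComponents G Tᶜ > numComponents G (Tᶜ ∪ {i})

lemma crown_adj {n : ℕ} {u v : Fin (2*n)} (hu : u.val % 2 = 0) (hv : v.val % 2 = 1)
    (h : v.val ≠ u.val + 1) : (crownGraph n).Adj u v := Or.inl ⟨hu, hv, h⟩

lemma crown_adj_elim {n : ℕ} {u v : Fin (2*n)} (h : (crownGraph n).Adj u v) :
    (u.val % 2 = 0 ∧ v.val % 2 = 1 ∧ v.val ≠ u.val + 1) ∨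
    (v.val % 2 = 0 ∧ u.val % 2 = 1 ∧ u.val ≠ v.val + 1) := h

lemma not_crown_adj_partner {n : ℕ} {u v : Fin (2*n)} (hu : u.val % 2 = 0)
    (hv : v.val = u.val + 1) : ¬ (crownGraph n).Adj u v := by
  rintro (⟨h1,h2,h3⟩|⟨h1,h2,h3⟩) <;> omega

lemma exists_odd_avoid {n : ℕ} (hn : 3 ≤ n) (p q : ℕ) :
    ∃ w : Fin (2*n), w.val % 2 = 1 ∧ w.val ≠ p ∧ w.val ≠ q := by
  have h : ∃ w : ℕ, w < 2*n ∧ w % 2 = 1 ∧ w ≠ p ∧ w ≠ q := by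
    by_cases h1 : p ≠ 1 ∧ q ≠ 1
    · exact ⟨1, by omega, by omega, h1.1.symm, h1.2.symm⟩
    by_cases h3 : p ≠ 3 ∧ q ≠ 3
    · exact ⟨3, by omega, by omega, h3.1.symm, h3.2.symm⟩
    rw [not_and_or, not_ne_iff, not_ne_iff] at h1 h3
    exact ⟨5, by omega, by omega, by omega, by omega⟩
  obtain ⟨w, hw, hw1, hw2, hw3⟩ := h
  exact ⟨⟨w, hw⟩, hw1, hw2, hw3⟩

lemma reachable_eq_of_isolated {V : Type*} {G : SimpleGraph V} {v u : V}
    (h : ∀ w, ¬ G.Adj v w) (hr : G.Reachable v u) : v = u := by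
  obtain ⟨w⟩ := hr
  cases w with
  | nil => rfl
  | cons ha _ => exact absurd ha (h _)

lemma induce_connected {n : ℕ} (hn : 3 ≤ n) {s : Set (Fin (2*n))}
    (hY : ∀ v : Fin (2*n), v.val % 2 = 1 → v ∈ s)
    {a b : Fin (2*n)} (ha : a ∈ s) (hb : b ∈ s) (hae : a.val % 2 = 0)
    (hbe : b.val % 2 = 0) (hab : a ≠ b) :
    ((crownGraph n).induce s).Connected := by
  have even_reach : ∀ (u : Fin (2*n)) (hu : u ∈ s), u.val % 2 = 0 →
      ((crownGraph n).induce s).Reachable ⟨u, hu⟩ ⟨a, ha⟩ := by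
    intro u hu hue
    by_cases h : u = a
    · subst h; exact SimpleGraph.Reachable.refl _
    · obtain ⟨w, hw1, hw2, hw3⟩ := exists_odd_avoid hn (u.val + 1) (a.val + 1)
      have hws : w ∈ s := hY w hw1
      have h1 : ((crownGraph n).induce s).Adj ⟨u, hu⟩ ⟨w, hws⟩ := crown_adj hue hw1 hw2
      have h2 : ((crownGraph n).induce s).Adj ⟨w, hws⟩ ⟨a, ha⟩ :=
        ((crown_adj hae hw1 hw3) : (crownGraph n).Adj a w).symm
      exact (h1.reachable).trans h2.reachable
  have key : ∀ v : s, ((crownGraph n).induce s).Reachable v ⟨a, ha⟩ := by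
    rintro ⟨v, hv⟩
    rcases Nat.even_or_odd v.val with he | ho
    · exact even_reach v hv (Nat.even_iff.mp he)
    · have hvo : v.val % 2 = 1 := Nat.odd_iff.mp ho
      by_cases hpa : v.val = a.val + 1
      · have hvb : v.val ≠ b.val + 1 := by
          intro hc
          exact hab (Fin.ext (by omega))
        have h1 : ((crownGraph n).induce s).Adj ⟨v, hv⟩ ⟨b, hb⟩ :=
          ((crown_adj hbe hvo hvb) : (crownGraph n).Adj b v).symm
        exact h1.reachable.trans (even_reach b hb hbe)
      · have h1 : ((crownGraph n).induce s).Adj ⟨v, hv⟩ ⟨a, ha⟩ :=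
          ((crown_adj hae hvo hpa) : (crownGraph n).Adj a v).symm
        exact h1.reachable
  exact (connected_iff_exists_forall_reachable _).mpr ⟨⟨a, ha⟩, fun w => (key w).symm⟩

lemma numComponents_eq_one {m : ℕ} {G : SimpleGraph (Fin m)} {s : Set (Fin m)}
    (h : (G.induce s).Connected) : numComponents G s = 1 := by
  have hne : Nonempty (G.induce s).ConnectedComponent := by
    obtain ⟨v⟩ := h.nonempty
    exact ⟨(G.induce s).connectedComponentMk v⟩
  have hss : Subsingleton (G.induce s).ConnectedComponent := by
    constructor
    refine SimpleGraph.ConnectedComponent.ind₂ fun v w => ?_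
    exact SimpleGraph.ConnectedComponent.sound (h.preconnected v w)
  exact Nat.card_unique

theorem crown_cutPointProperty_subset_X (n : ℕ) (hn : 3 ≤ n) (T : Finset (Fin (2 * n)))
    (hne : T.Nonempty) (hTX : T ⊆ crownX n) :
    cutPointProperty (crownGraph n) (↑T : Set (Fin (2 * n))) ↔
      (T = crownX n ∨ ∃ v ∈ crownX n, T = (crownX n).erase v) := by
  have hodd_not : ∀ v : Fin (2*n), v.val % 2 = 1 → v ∉ T := by
    intro v hv hvT
    have := hTX hvT
    simp [crownX] at this
    omega
  constructor
  · intro hcut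
    by_contra hcon
    push_neg at hcon
    obtain ⟨hX, hE⟩ := hcon
    obtain ⟨a, haS, b, hbS, hab⟩ :
        ∃ a ∈ crownX n \ T, ∃ b ∈ crownX n \ T, a ≠ b := by
      have hne' : (crownX n \ T).Nonempty := by
        rw [Finset.sdiff_nonempty]
        intro hsub
        exact hX (Finset.Subset.antisymm hTX hsub)
      obtain ⟨a, haS⟩ := hne'
      by_cases hb : ∃ b ∈ crownX n \ T, b ≠ a
      · obtain ⟨b, hbS, hba⟩ := hb
        exact ⟨a, haS, b, hbS, hba.symm⟩
      · push_neg at hb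
        have hsing : crownX n \ T = {a} := by
          apply Finset.Subset.antisymm
          · intro x hx
            simp [hb x hx]
          · simp [haS]
        have hTeq : T = (crownX n).erase a := by
          rw [Finset.erase_eq, ← hsing, Finset.sdiff_sdiff_self_left,
            Finset.inter_eq_right.mpr hTX]
        exact ((hE a (Finset.mem_sdiff.mp haS).1) hTeq).elim
    rw [Finset.mem_sdiff] at haS hbS
    have hae : a.val % 2 = 0 := by simpa [crownX] using haS.1
    have hbe : b.val % 2 = 0 := by simpa [crownX] using hbS.1
    have hYc : ∀ v : Fin (2*n), v.val % 2 = 1 → v ∈ (↑T : Set (Fin (2*n)))ᶜ := by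
      intro v hv
      simpa using hodd_not v hv
    have hconn1 : ((crownGraph n).induce (↑T : Set (Fin (2*n)))ᶜ).Connected :=
      induce_connected hn hYc (by simpa using haS.2) (by simpa using hbS.2) hae hbe hab
    rcases hcut with h0 | hcut
    · exact hne.ne_empty (Finset.coe_eq_empty.mp h0)
    · obtain ⟨i, hiT⟩ := hne
      have hconn2 : ((crownGraph n).induce ((↑T : Set (Fin (2*n)))ᶜ ∪ {i})).Connected :=
        induce_connected hn (fun v hv => Or.inl (hYc v hv))
          (Or.inl (by simpa using haS.2)) (Or.inl (by simpa using hbS.2)) hae hbe hab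
      have := hcut i (by simpa using hiT)
      rw [numComponents_eq_one hconn1, numComponents_eq_one hconn2] at this
      omega
  · rintro (rfl | ⟨x, hx, rfl⟩)
    · refine Or.inr fun i hi => ?_
      have hie : i.val % 2 = 0 := by
        have : i ∈ crownX n := by simpa using hi
        simpa [crownX] using this
      have hilt := i.isLt
      set s : Set (Fin (2*n)) := (↑(crownX n) : Set (Fin (2*n)))ᶜ with hs
      have hs_mem : ∀ v : Fin (2*n), v ∈ s ↔ v.val % 2 = 1 := by
        intro v
        rw [hs, Set.mem_compl_iff, Finset.mem_coe]
        simp only [crownX, Finset.mem_filter, Finset.mem_univ, true_and]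
        omega
      have hiso : ∀ (v w : s), ¬ ((crownGraph n).induce s).Adj v w := by
        rintro ⟨v, hv⟩ ⟨w, hw⟩ hadj
        have hadj' : (crownGraph n).Adj v w := hadj
        have hv1 := (hs_mem v).mp hv
        have hw1 := (hs_mem w).mp hw
        rcases crown_adj_elim hadj' with ⟨h1, _, _⟩ | ⟨h1, _, _⟩ <;> omega
      have h3le : 3 ≤ numComponents (crownGraph n) s := by
        have hinj : Function.Injective (fun k : Fin 3 =>
            ((crownGraph n).induce s).connectedComponentMk
              ⟨⟨2 * k.val + 1, by have := k.isLt; omega⟩,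
                (hs_mem _).mpr (show (2 * k.val + 1) % 2 = 1 by omega)⟩) := by
          intro k l hkl
          have hr := SimpleGraph.ConnectedComponent.exact hkl
          have heq := reachable_eq_of_isolated (fun w => hiso _ w) hr
          have h2 : 2 * k.val + 1 = 2 * l.val + 1 :=
            congrArg Fin.val (Subtype.ext_iff.mp heq)
          exact Fin.ext (by omega)
        calc (3 : ℕ) = Nat.card (Fin 3) := by simp
          _ ≤ _ := Nat.card_le_card_of_injective _ hinj
      have hi1lt : i.val + 1 < 2*n := by omega
      set p : Fin (2*n) := ⟨i.val + 1, hi1lt⟩ with hp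
      set t : Set (Fin (2*n)) := s ∪ {i} with ht
      have hit : i ∈ t := Or.inr rfl
      have hpt : p ∈ t := Or.inl ((hs_mem p).mpr (show (i.val + 1) % 2 = 1 by omega))
      have hle2 : numComponents (crownGraph n) t ≤ 2 := by
        have hsurj : Function.Surjective (fun k : Fin 2 =>
            if k = 0 then ((crownGraph n).induce t).connectedComponentMk ⟨i, hit⟩
            else ((crownGraph n).induce t).connectedComponentMk ⟨p, hpt⟩) := by
          intro c
          induction c using SimpleGraph.ConnectedComponent.ind with
          | _ v =>
            obtain ⟨v, hv⟩ := v
            by_cases hvi : v = i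
            · exact ⟨0, by simp [hvi]⟩
            · have hvs : v ∈ s := by
                rcases hv with h | h
                · exact h
                · exact absurd h hvi
              have hv1 := (hs_mem v).mp hvs
              by_cases hvp : v = p
              · exact ⟨1, by simp [hvp]⟩
              · refine ⟨0, ?_⟩
                simp only [if_pos rfl]
                refine (SimpleGraph.ConnectedComponent.sound ?_).symm
                have hadj0 : (crownGraph n).Adj i v :=
                  crown_adj hie hv1 (fun hc => hvp (Fin.ext hc))
                have hadj : ((crownGraph n).induce t).Adj ⟨i, hit⟩ ⟨v, hv⟩ := hadj0
                exact hadj.symm.reachable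
        calc numComponents (crownGraph n) t ≤ Nat.card (Fin 2) :=
              Nat.card_le_card_of_surjective _ hsurj
          _ = 2 := by simp
      show numComponents (crownGraph n) s > numComponents (crownGraph n) t
      omega
    · refine Or.inr fun i hi => ?_
      have hxe : x.val % 2 = 0 := by simpa [crownX] using hx
      have hix : i ≠ x ∧ i.val % 2 = 0 := by
        have hi' : i ∈ crownX n ∧ i ≠ x := by simpa using hi
        exact ⟨hi'.2, by simpa [crownX] using hi'.1⟩
      have hilt := i.isLt
      have hxlt := x.isLt
      set s : Set (Fin (2*n)) := (↑((crownX n).erase x) : Set (Fin (2*n)))ᶜ with hs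
      have hs_mem : ∀ v : Fin (2*n), v ∈ s ↔ (v.val % 2 = 1 ∨ v = x) := by
        intro v
        rw [hs, Set.mem_compl_iff, Finset.mem_coe, Finset.mem_erase]
        simp only [crownX, Finset.mem_filter, Finset.mem_univ, true_and]
        by_cases hvx : v = x <;> simp [hvx] <;> omega
      have hx1lt : x.val + 1 < 2*n := by omega
      set p : Fin (2*n) := ⟨x.val + 1, hx1lt⟩ with hp
      have hpv : p.val = x.val + 1 := rfl
      have hps : p ∈ s := (hs_mem p).mpr (Or.inl (show (x.val + 1) % 2 = 1 by omega))
      have hiso : ∀ w : s, ¬ ((crownGraph n).induce s).Adj ⟨p, hps⟩ w := by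
        rintro ⟨w, hw⟩ hadj
        have hadj' : (crownGraph n).Adj p w := hadj
        rcases (hs_mem w).mp hw with hw1 | rfl
        · rcases crown_adj_elim hadj' with ⟨h1, h2, h3⟩ | ⟨h1, h2, h3⟩ <;> omega
        · exact not_crown_adj_partner hxe hpv hadj'.symm
      obtain ⟨w, hw1, hw2, _⟩ := exists_odd_avoid hn (x.val + 1) (x.val + 1)
      have hws : w ∈ s := (hs_mem w).mpr (Or.inl hw1)
      have h2le : 2 ≤ numComponents (crownGraph n) s := by
        have hpw : ((crownGraph n).induce s).connectedComponentMk ⟨p, hps⟩ ≠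
            ((crownGraph n).induce s).connectedComponentMk ⟨w, hws⟩ := by
          intro hkl
          have heq := reachable_eq_of_isolated hiso (SimpleGraph.ConnectedComponent.exact hkl)
          have h3 : p.val = w.val := congrArg Fin.val (Subtype.ext_iff.mp heq)
          omega
        have hinj : Function.Injective (fun k : Fin 2 =>
            if k = 0 then ((crownGraph n).induce s).connectedComponentMk ⟨p, hps⟩
            else ((crownGraph n).induce s).connectedComponentMk ⟨w, hws⟩) := by
          intro k l hkl
          fin_cases k <;> fin_cases l <;> simp_all <;> exact hpw hkl.symm
        calc (2 : ℕ) = Nat.card (Fin 2) := by simp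
          _ ≤ _ := Nat.card_le_card_of_injective _ hinj
      have hconn : ((crownGraph n).induce (s ∪ {i})).Connected :=
        induce_connected hn (fun v hv => Or.inl ((hs_mem v).mpr (Or.inl hv)))
          (Or.inr rfl) (Or.inl ((hs_mem x).mpr (Or.inr rfl))) hix.2 hxe hix.1
      show numComponents (crownGraph n) s > numComponents (crownGraph n) (s ∪ {i})
      rw [numComponents_eq_one hconn]
      omega
end

section
/- Let n ≥ 3 and G = C_{n,n}, with X the odd vertices and Y the even vertices. Suppose T ⊆ [2n] is nonempty, T ⊄ X, and T ⊄ Y. Then T has the cut point property if and only if T = A ∪ {a+1 : a ∈ A} for some A ⊆ X with |A| = n - 2. -/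
open SimpleGraph

/-- The successor map on `Fin (2*n)` (no wrap-around occurs on even indices). -/
def finSucc {n : ℕ} (a : Fin (2 * n)) : Fin (2 * n) :=
  ⟨(a.val + 1) % (2 * n), Nat.mod_lt _ a.pos⟩

section Helpers
set_option linter.unusedSectionVars false
variable {V : Type*} [Finite V] (G : SimpleGraph V) (s : Set V)

lemma numComponents_pos (hs : s.Nonempty) : 1 ≤ numComponents G s := by
  have : Nonempty s := hs.to_subtype
  have hne : Nonempty (G.induce s).ConnectedComponent :=
    ⟨(G.induce s).connectedComponentMk (Classical.arbitrary _)⟩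
  have : Finite (G.induce s).ConnectedComponent := Quot.finite _
  exact Nat.one_le_iff_ne_zero.2 (Nat.card_ne_zero.2 ⟨hne, this⟩)

lemma numComponents_eq_one_s3 (hs : s.Nonempty) (h : (G.induce s).Preconnected) :
    numComponents G s = 1 := by
  have : Nonempty s := hs.to_subtype
  have hsub : Subsingleton (G.induce s).ConnectedComponent := by
    constructor
    intro c d
    obtain ⟨v, rfl⟩ := c.exists_rep
    obtain ⟨w, rfl⟩ := d.exists_rep
    exact ConnectedComponent.sound (h v w)
  have hne : Nonempty (G.induce s).ConnectedComponent :=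
    ⟨(G.induce s).connectedComponentMk (Classical.arbitrary _)⟩
  rw [numComponents, Nat.card_eq_one_iff_unique]
  exact ⟨hsub, hne⟩

lemma numComponents_eq_two (f : s → Bool)
    (hadj : ∀ x y, (G.induce s).Adj x y → f x = f y)
    (hreach : ∀ x y, f x = f y → (G.induce s).Reachable x y)
    (h0 : ∃ x, f x = false) (h1 : ∃ x, f x = true) :
    numComponents G s = 2 := by
  have hwalk : ∀ (v w : ↥s) (p : (G.induce s).Walk v w), p.IsPath → f v = f w := by
    intro v w p hp
    clear hp
    induction p with
    | nil => rfl
    | cons h p ih => exact (hadj _ _ h).trans ih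
  have hbij : Function.Bijective (ConnectedComponent.lift f hwalk) := by
    constructor
    · intro c d hcd
      obtain ⟨v, rfl⟩ := c.exists_rep
      obtain ⟨w, rfl⟩ := d.exists_rep
      exact ConnectedComponent.sound (hreach _ _ hcd)
    · intro b
      cases b
      · obtain ⟨x, hx⟩ := h0
        exact ⟨(G.induce s).connectedComponentMk x, hx⟩
      · obtain ⟨x, hx⟩ := h1
        exact ⟨(G.induce s).connectedComponentMk x, hx⟩
  rw [numComponents, Nat.card_congr (Equiv.ofBijective _ hbij)]
  simp

lemma numComponents_edgeless (h : ∀ x y : ↥s, ¬ (G.induce s).Adj x y) :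
    numComponents G s = s.ncard := by
  have hbij : Function.Bijective ((G.induce s).connectedComponentMk) := by
    constructor
    · intro v w hvw
      have : (G.induce s).Reachable v w := (ConnectedComponent.eq).mp hvw
      obtain ⟨p⟩ := this
      cases p with
      | nil => rfl
      | cons ha _ => exact absurd ha (h _ _)
    · exact fun c => c.exists_rep
  rw [numComponents, ← Nat.card_congr (Equiv.ofBijective _ hbij), Nat.card_coe_set_eq]

end Helpers

section Crown
variable {n : ℕ}

lemma crown_adj_iff {u v : Fin (2*n)} : (crownGraph n).Adj u v ↔
    ((u.val % 2 = 0 ∧ v.val % 2 = 1 ∧ v.val ≠ u.val + 1) ∨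
     (v.val % 2 = 0 ∧ u.val % 2 = 1 ∧ u.val ≠ v.val + 1)) := Iff.rfl

lemma ireach_of_adj {s : Set (Fin (2*n))} {x y : ↥s} (h : (crownGraph n).Adj x.1 y.1) :
    ((crownGraph n).induce s).Reachable x y := SimpleGraph.Adj.reachable h

lemma ireach_of_val_eq {s : Set (Fin (2*n))} {x y : ↥s} (h : x.1.val = y.1.val) :
    ((crownGraph n).induce s).Reachable x y := by
  rw [show x = y from Subtype.ext (Fin.ext h)]

lemma crownX_card : (crownX n).card = n := by
  have himg : crownX n = Finset.image (fun i : Fin n => (⟨2*i.val, by omega⟩ : Fin (2*n))) Finset.univ := by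
    ext u
    simp only [crownX, Finset.mem_filter, Finset.mem_univ, true_and, Finset.mem_image]
    constructor
    · intro h
      exact ⟨⟨u.val/2, by omega⟩, by ext; simp; omega⟩
    · rintro ⟨i, _, rfl⟩; simp [Nat.mul_mod_right]
  rw [himg, Finset.card_image_of_injective _ (by intro i j h; ext; have := congrArg Fin.val h; simpa using this), Finset.card_univ, Fintype.card_fin]

lemma finSucc_val {a : Fin (2*n)} (h : a.val % 2 = 0) : (finSucc a).val = a.val + 1 := by
  have : a.val + 1 < 2*n := by have := a.isLt; omega
  simp [finSucc, Nat.mod_eq_of_lt this]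

lemma mem_sdiff_union_succ_iff (a b : Fin (2*n)) (ha : a.val % 2 = 0) (hb : b.val % 2 = 0)
    (hab : a.val ≠ b.val) (x : Fin (2*n)) :
    (x ∈ (crownX n \ {a,b}) ∪ (crownX n \ {a,b}).image finSucc) ↔
      ¬(x.val = a.val ∨ x.val = a.val+1 ∨ x.val = b.val ∨ x.val = b.val+1) := by
  have hx := x.isLt
  constructor
  · intro h
    rcases Finset.mem_union.mp h with h | h
    · simp only [Finset.mem_sdiff, crownX, Finset.mem_filter, Finset.mem_univ, true_and,
        Finset.mem_insert, Finset.mem_singleton] at h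
      obtain ⟨h2, hne⟩ := h
      have h3 : x.val ≠ a.val := fun hh => hne (Or.inl (Fin.ext hh))
      have h4 : x.val ≠ b.val := fun hh => hne (Or.inr (Fin.ext hh))
      omega
    · obtain ⟨c, hc, rfl⟩ := Finset.mem_image.mp h
      simp only [Finset.mem_sdiff, crownX, Finset.mem_filter, Finset.mem_univ, true_and,
        Finset.mem_insert, Finset.mem_singleton] at hc
      obtain ⟨h2, hne⟩ := hc
      have h3 : c.val ≠ a.val := fun hh => hne (Or.inl (Fin.ext hh))
      have h4 : c.val ≠ b.val := fun hh => hne (Or.inr (Fin.ext hh))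
      rw [finSucc_val h2]
      have := c.isLt
      omega
  · intro h
    rcases Nat.mod_two_eq_zero_or_one x.val with h2 | h2
    · apply Finset.mem_union_left
      simp only [Finset.mem_sdiff, crownX, Finset.mem_filter, Finset.mem_univ, true_and,
        Finset.mem_insert, Finset.mem_singleton]
      refine ⟨h2, ?_⟩
      rintro (rfl | rfl) <;> omega
    · apply Finset.mem_union_right
      have hx1 : 1 ≤ x.val := by omega
      refine Finset.mem_image.mpr ⟨⟨x.val - 1, by omega⟩, ?_, ?_⟩
      · simp only [Finset.mem_sdiff, crownX, Finset.mem_filter, Finset.mem_univ, true_and,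
          Finset.mem_insert, Finset.mem_singleton]
        constructor
        · show (x.val - 1) % 2 = 0
          omega
        · rintro (hh | hh)
          · have h9 : x.val - 1 = a.val := congrArg Fin.val hh
            omega
          · have h9 : x.val - 1 = b.val := congrArg Fin.val hh
            omega
      · have hc2 : (x.val - 1) % 2 = 0 := by omega
        ext
        rw [finSucc_val hc2]
        show x.val - 1 + 1 = x.val
        omega

end Crown

set_option maxHeartbeats 2000000 in
theorem crown_cutPointProperty_mixed (n : ℕ) (hn : 3 ≤ n) (T : Finset (Fin (2 * n)))
    (hne : T.Nonempty) (hTX : ¬ T ⊆ crownX n) (hTY : ¬ T ⊆ crownY n) :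
    cutPointProperty (crownGraph n) (↑T : Set (Fin (2 * n))) ↔
      ∃ A ⊆ crownX n, A.card = n - 2 ∧ T = A ∪ A.image finSucc := by
  constructor
  · intro hcp
    rcases hcp with h0 | hcut
    · exfalso
      obtain ⟨j, hj⟩ := hne
      have hj' : (j : Fin (2*n)) ∈ (↑T : Set (Fin (2*n))) := hj
      rw [h0] at hj'
      exact hj'
    obtain ⟨e, heT, heY⟩ := Finset.not_subset.mp hTY
    have he2 : e.val % 2 = 0 := by
      simp only [crownY, Finset.mem_filter, Finset.mem_univ, true_and] at heY
      omega
    obtain ⟨o, hoT, hoX⟩ := Finset.not_subset.mp hTX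
    have ho2 : o.val % 2 = 1 := by
      simp only [crownX, Finset.mem_filter, Finset.mem_univ, true_and] at hoX
      omega
    set S : Set (Fin (2*n)) := (↑T : Set (Fin (2*n)))ᶜ with hSdef
    have hSmem : ∀ x : Fin (2*n), x ∈ S ↔ x ∉ T := by
      intro x
      rw [hSdef, Set.mem_compl_iff, Finset.mem_coe]
    have heS : e ∉ S := fun h => (hSmem e).mp h heT
    have hoS : o ∉ S := fun h => (hSmem o).mp h hoT
    have heT' : e ∈ (↑T : Set (Fin (2*n))) := Finset.mem_coe.mpr heT
    have hoT' : o ∈ (↑T : Set (Fin (2*n))) := Finset.mem_coe.mpr hoT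
    have hmemU : ∀ (w t : Fin (2*n)), w ∈ S ∪ {t} ↔ w ∈ S ∨ w = t := by
      intro w t
      rw [Set.mem_union, Set.mem_singleton_iff]
    have hub_pc : ∀ (s' : Set (Fin (2*n))) (z : ↥s'),
        (∀ x : ↥s', ((crownGraph n).induce s').Reachable x z) →
        ((crownGraph n).induce s').Preconnected :=
      fun _ z h x y => (h x).trans (h y).symm
    -- Step A : there is an odd vertex in S
    have hA : ∃ v : Fin (2*n), v ∈ S ∧ v.val % 2 = 1 := by
      by_contra hc
      push_neg at hc
      have hall : ∀ z : Fin (2*n), z ∈ S ∪ {e} → z.val % 2 = 0 := by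
        intro z hz
        rcases (hmemU z e).mp hz with hz | rfl
        · have := hc z hz; omega
        · exact he2
      have h1 : numComponents (crownGraph n) S = S.ncard := by
        apply numComponents_edgeless
        intro x y hxy
        have h' : (crownGraph n).Adj x.1 y.1 := hxy
        rw [crown_adj_iff] at h'
        have hx := hc x.1 x.2
        have hy := hc y.1 y.2
        omega
      have h2 : numComponents (crownGraph n) (S ∪ {e}) = (S ∪ {e}).ncard := by
        apply numComponents_edgeless
        intro x y hxy
        have h' : (crownGraph n).Adj x.1 y.1 := hxy
        rw [crown_adj_iff] at h'
        have hx := hall x.1 x.2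
        have hy := hall y.1 y.2
        omega
      have h3 : (S ∪ {e}).ncard = S.ncard + 1 := by
        rw [Set.union_singleton, Set.ncard_insert_of_notMem heS S.toFinite]
      have h4 := hcut e heT'
      rw [h1, h2, h3] at h4
      omega
    -- Step B : there is an even vertex in S
    have hB : ∃ u : Fin (2*n), u ∈ S ∧ u.val % 2 = 0 := by
      by_contra hc
      push_neg at hc
      have hall : ∀ z : Fin (2*n), z ∈ S ∪ {o} → z.val % 2 = 1 := by
        intro z hz
        rcases (hmemU z o).mp hz with hz | rfl
        · have := hc z hz; omega
        · exact ho2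
      have h1 : numComponents (crownGraph n) S = S.ncard := by
        apply numComponents_edgeless
        intro x y hxy
        have h' : (crownGraph n).Adj x.1 y.1 := hxy
        rw [crown_adj_iff] at h'
        have hx := hc x.1 x.2
        have hy := hc y.1 y.2
        omega
      have h2 : numComponents (crownGraph n) (S ∪ {o}) = (S ∪ {o}).ncard := by
        apply numComponents_edgeless
        intro x y hxy
        have h' : (crownGraph n).Adj x.1 y.1 := hxy
        rw [crown_adj_iff] at h'
        have hx := hall x.1 x.2
        have hy := hall y.1 y.2
        omega
      have h3 : (S ∪ {o}).ncard = S.ncard + 1 := by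
        rw [Set.union_singleton, Set.ncard_insert_of_notMem hoS S.toFinite]
      have h4 := hcut o hoT'
      rw [h1, h2, h3] at h4
      omega
    -- S is not preconnected
    have hnpc : ¬ ((crownGraph n).induce S).Preconnected := by
      intro hpc
      obtain ⟨v, hvS, _⟩ := hA
      have h1 := numComponents_eq_one_s3 (crownGraph n) S ⟨v, hvS⟩ hpc
      have h2 := numComponents_pos (crownGraph n) (S ∪ {e}) ⟨e, Or.inr rfl⟩
      have h4 := hcut e heT'
      omega
    -- Step C : there are two distinct odd vertices in S
    have hC : ∃ v w : Fin (2*n), v ∈ S ∧ w ∈ S ∧ v.val % 2 = 1 ∧ w.val % 2 = 1 ∧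
        v.val ≠ w.val := by
      by_contra hc
      push_neg at hc
      obtain ⟨v, hvS, hv2⟩ := hA
      have huniq : ∀ w, w ∈ S → w.val % 2 = 1 → w.val = v.val := by
        intro w hw h2
        exact hc w v hw hvS h2 hv2
      by_cases hvp : (⟨v.val - 1, by omega⟩ : Fin (2*n)) ∈ S
      · -- v - 1 ∈ S : both components counts are 2
        have hev : e.val ≠ v.val - 1 := by
          intro hh
          apply heS
          rw [show e = (⟨v.val - 1, by omega⟩ : Fin (2*n)) from Fin.ext hh]
          exact hvp
        have h1 : numComponents (crownGraph n) S = 2 := by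
          apply numComponents_eq_two (crownGraph n) S
            (fun x => decide (x.1.val = v.val - 1))
          · intro x y hxy
            have h' : (crownGraph n).Adj x.1 y.1 := hxy
            rw [crown_adj_iff] at h'
            rw [decide_eq_decide]
            rcases h' with ⟨hx0, hy1, hne'⟩ | ⟨hy0, hx1, hne'⟩
            · have := huniq y.1 y.2 hy1; omega
            · have := huniq x.1 x.2 hx1; omega
          · intro x y hf
            rw [decide_eq_decide] at hf
            obtain ⟨zv, hzv⟩ : ∃ z : ↥S, z.1.val = v.val := ⟨⟨v, hvS⟩, rfl⟩
            have key : ∀ z : ↥S, z.1.val ≠ v.val - 1 →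
                ((crownGraph n).induce S).Reachable z zv := by
              intro z hz
              rcases Nat.mod_two_eq_zero_or_one z.1.val with h2 | h2
              · exact ireach_of_adj (Or.inl ⟨h2, by omega, by omega⟩)
              · exact ireach_of_val_eq (by have := huniq z.1 z.2 h2; omega)
            by_cases hxv : x.1.val = v.val - 1
            · exact ireach_of_val_eq (by omega)
            · have hyv : ¬ y.1.val = v.val - 1 := by omega
              exact (key x hxv).trans (key y hyv).symm
          · exact ⟨⟨v, hvS⟩, decide_eq_false (show ¬ (v.val = v.val - 1) by omega)⟩
          · exact ⟨⟨⟨v.val - 1, by omega⟩, hvp⟩,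
              decide_eq_true (show v.val - 1 = v.val - 1 from rfl)⟩
        have h2 : numComponents (crownGraph n) (S ∪ {e}) = 2 := by
          have huniq' : ∀ w, w ∈ S ∪ {e} → w.val % 2 = 1 → w.val = v.val := by
            intro w hw h2
            rcases (hmemU w e).mp hw with hw | rfl
            · exact huniq w hw h2
            · omega
          apply numComponents_eq_two (crownGraph n) (S ∪ {e})
            (fun x => decide (x.1.val = v.val - 1))
          · intro x y hxy
            have h' : (crownGraph n).Adj x.1 y.1 := hxy
            rw [crown_adj_iff] at h'
            rw [decide_eq_decide]
            rcases h' with ⟨hx0, hy1, hne'⟩ | ⟨hy0, hx1, hne'⟩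
            · have := huniq' y.1 y.2 hy1; omega
            · have := huniq' x.1 x.2 hx1; omega
          · intro x y hf
            rw [decide_eq_decide] at hf
            obtain ⟨zv, hzv⟩ : ∃ z : ↥(S ∪ {e}), z.1.val = v.val := ⟨⟨v, Or.inl hvS⟩, rfl⟩
            have key : ∀ z : ↥(S ∪ {e}), z.1.val ≠ v.val - 1 →
                ((crownGraph n).induce (S ∪ {e})).Reachable z zv := by
              intro z hz
              rcases Nat.mod_two_eq_zero_or_one z.1.val with h2 | h2
              · exact ireach_of_adj (Or.inl ⟨h2, by omega, by omega⟩)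
              · exact ireach_of_val_eq (by have := huniq' z.1 z.2 h2; omega)
            by_cases hxv : x.1.val = v.val - 1
            · exact ireach_of_val_eq (by omega)
            · have hyv : ¬ y.1.val = v.val - 1 := by omega
              exact (key x hxv).trans (key y hyv).symm
          · exact ⟨⟨v, Or.inl hvS⟩, decide_eq_false (show ¬ (v.val = v.val - 1) by omega)⟩
          · exact ⟨⟨⟨v.val - 1, by omega⟩, Or.inl hvp⟩,
              decide_eq_true (show v.val - 1 = v.val - 1 from rfl)⟩
        have h4 := hcut e heT'
        rw [h1, h2] at h4
        omega
      · -- v - 1 ∉ S : S is preconnected, contradiction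
        apply hnpc
        obtain ⟨zv, hzv⟩ : ∃ z : ↥S, z.1.val = v.val := ⟨⟨v, hvS⟩, rfl⟩
        apply hub_pc S zv
        intro x
        rcases Nat.mod_two_eq_zero_or_one x.1.val with hx2 | hx2
        · have hxv : x.1.val ≠ v.val - 1 := by
            intro hh
            apply hvp
            have hx' := x.2
            rwa [show x.1 = (⟨v.val - 1, by omega⟩ : Fin (2*n)) from Fin.ext hh] at hx'
          exact ireach_of_adj (Or.inl ⟨hx2, by omega, by omega⟩)
        · exact ireach_of_val_eq (by have := huniq x.1 x.2 hx2; omega)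
    -- Step D : there are two distinct even vertices in S
    have hD : ∃ u w : Fin (2*n), u ∈ S ∧ w ∈ S ∧ u.val % 2 = 0 ∧ w.val % 2 = 0 ∧
        u.val ≠ w.val := by
      by_contra hc
      push_neg at hc
      obtain ⟨u, huS, hu2⟩ := hB
      have huniq : ∀ w, w ∈ S → w.val % 2 = 0 → w.val = u.val := by
        intro w hw h2
        exact hc w u hw huS h2 hu2
      have hult : u.val + 1 < 2*n := by have := u.isLt; omega
      by_cases hup : (⟨u.val + 1, hult⟩ : Fin (2*n)) ∈ S
      · have hov : o.val ≠ u.val + 1 := by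
          intro hh
          apply hoS
          rw [show o = (⟨u.val + 1, hult⟩ : Fin (2*n)) from Fin.ext hh]
          exact hup
        have h1 : numComponents (crownGraph n) S = 2 := by
          apply numComponents_eq_two (crownGraph n) S
            (fun x => decide (x.1.val = u.val + 1))
          · intro x y hxy
            have h' : (crownGraph n).Adj x.1 y.1 := hxy
            rw [crown_adj_iff] at h'
            rw [decide_eq_decide]
            rcases h' with ⟨hx0, hy1, hne'⟩ | ⟨hy0, hx1, hne'⟩
            · have := huniq x.1 x.2 hx0; omega
            · have := huniq y.1 y.2 hy0; omega
          · intro x y hf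
            rw [decide_eq_decide] at hf
            obtain ⟨zu, hzu⟩ : ∃ z : ↥S, z.1.val = u.val := ⟨⟨u, huS⟩, rfl⟩
            have key : ∀ z : ↥S, z.1.val ≠ u.val + 1 →
                ((crownGraph n).induce S).Reachable z zu := by
              intro z hz
              rcases Nat.mod_two_eq_zero_or_one z.1.val with h2 | h2
              · exact ireach_of_val_eq (by have := huniq z.1 z.2 h2; omega)
              · exact ireach_of_adj (Or.inr ⟨by omega, h2, by omega⟩)
            by_cases hxv : x.1.val = u.val + 1
            · exact ireach_of_val_eq (by omega)
            · have hyv : ¬ y.1.val = u.val + 1 := by omega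
              exact (key x hxv).trans (key y hyv).symm
          · exact ⟨⟨u, huS⟩, decide_eq_false (show ¬ (u.val = u.val + 1) by omega)⟩
          · exact ⟨⟨⟨u.val + 1, hult⟩, hup⟩,
              decide_eq_true (show u.val + 1 = u.val + 1 from rfl)⟩
        have h2 : numComponents (crownGraph n) (S ∪ {o}) = 2 := by
          have huniq' : ∀ w, w ∈ S ∪ {o} → w.val % 2 = 0 → w.val = u.val := by
            intro w hw h2
            rcases (hmemU w o).mp hw with hw | rfl
            · exact huniq w hw h2
            · omega
          apply numComponents_eq_two (crownGraph n) (S ∪ {o})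
            (fun x => decide (x.1.val = u.val + 1))
          · intro x y hxy
            have h' : (crownGraph n).Adj x.1 y.1 := hxy
            rw [crown_adj_iff] at h'
            rw [decide_eq_decide]
            rcases h' with ⟨hx0, hy1, hne'⟩ | ⟨hy0, hx1, hne'⟩
            · have := huniq' x.1 x.2 hx0; omega
            · have := huniq' y.1 y.2 hy0; omega
          · intro x y hf
            rw [decide_eq_decide] at hf
            obtain ⟨zu, hzu⟩ : ∃ z : ↥(S ∪ {o}), z.1.val = u.val := ⟨⟨u, Or.inl huS⟩, rfl⟩
            have key : ∀ z : ↥(S ∪ {o}), z.1.val ≠ u.val + 1 →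
                ((crownGraph n).induce (S ∪ {o})).Reachable z zu := by
              intro z hz
              rcases Nat.mod_two_eq_zero_or_one z.1.val with h2 | h2
              · exact ireach_of_val_eq (by have := huniq' z.1 z.2 h2; omega)
              · exact ireach_of_adj (Or.inr ⟨by omega, h2, by omega⟩)
            by_cases hxv : x.1.val = u.val + 1
            · exact ireach_of_val_eq (by omega)
            · have hyv : ¬ y.1.val = u.val + 1 := by omega
              exact (key x hxv).trans (key y hyv).symm
          · exact ⟨⟨u, Or.inl huS⟩, decide_eq_false (show ¬ (u.val = u.val + 1) by omega)⟩
          · exact ⟨⟨⟨u.val + 1, hult⟩, Or.inl hup⟩,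
              decide_eq_true (show u.val + 1 = u.val + 1 from rfl)⟩
        have h4 := hcut o hoT'
        rw [h1, h2] at h4
        omega
      · apply hnpc
        obtain ⟨zu, hzu⟩ : ∃ z : ↥S, z.1.val = u.val := ⟨⟨u, huS⟩, rfl⟩
        apply hub_pc S zu
        intro x
        rcases Nat.mod_two_eq_zero_or_one x.1.val with hx2 | hx2
        · exact ireach_of_val_eq (by have := huniq x.1 x.2 hx2; omega)
        · have hxv : x.1.val ≠ u.val + 1 := by
            intro hh
            apply hup
            have hx' := x.2
            rwa [show x.1 = (⟨u.val + 1, hult⟩ : Fin (2*n)) from Fin.ext hh] at hx'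
          exact ireach_of_adj (Or.inr ⟨by omega, hx2, by omega⟩)
    obtain ⟨v1, v2, hv1S, hv2S, hv12, hv22, hv1v2⟩ := hC
    obtain ⟨u1, u2, hu1S, hu2S, hu12, hu22, hu1u2⟩ := hD
    -- E1 : every even vertex of S has its successor in S
    have hE1 : ∀ u : Fin (2*n), u ∈ S → u.val % 2 = 0 → ∃ w, w ∈ S ∧ w.val = u.val + 1 := by
      intro u huS hu2
      by_contra hc
      push_neg at hc
      exfalso
      apply hnpc
      obtain ⟨zu, hzu⟩ : ∃ z : ↥S, z.1.val = u.val := ⟨⟨u, huS⟩, rfl⟩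
      apply hub_pc S zu
      intro x
      rcases Nat.mod_two_eq_zero_or_one x.1.val with hx2 | hx2
      · -- even : route through an odd vertex among v1, v2
        by_cases hxw : v1.val = x.1.val + 1
        · obtain ⟨z2, hz2⟩ : ∃ z : ↥S, z.1.val = v2.val := ⟨⟨v2, hv2S⟩, rfl⟩
          have hne2 := hc v2 hv2S
          exact (ireach_of_adj (x := x) (y := z2)
              (Or.inl ⟨hx2, by omega, by omega⟩)).trans
            (ireach_of_adj (Or.inr ⟨by omega, by omega, by omega⟩))
        · obtain ⟨z1, hz1⟩ : ∃ z : ↥S, z.1.val = v1.val := ⟨⟨v1, hv1S⟩, rfl⟩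
          have hne1 := hc v1 hv1S
          exact (ireach_of_adj (x := x) (y := z1)
              (Or.inl ⟨hx2, by omega, by omega⟩)).trans
            (ireach_of_adj (Or.inr ⟨by omega, by omega, by omega⟩))
      · -- odd : adjacent to u directly
        have := hc x.1 x.2
        exact ireach_of_adj (Or.inr ⟨by omega, hx2, by omega⟩)
    -- E2 : every odd vertex of S has its predecessor in S
    have hE2 : ∀ v : Fin (2*n), v ∈ S → v.val % 2 = 1 → ∃ w, w ∈ S ∧ w.val = v.val - 1 := by
      intro v hvS hv2
      by_contra hc
      push_neg at hc
      exfalso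
      apply hnpc
      obtain ⟨zv, hzv⟩ : ∃ z : ↥S, z.1.val = v.val := ⟨⟨v, hvS⟩, rfl⟩
      apply hub_pc S zv
      intro x
      rcases Nat.mod_two_eq_zero_or_one x.1.val with hx2 | hx2
      · -- even : adjacent to v directly
        have := hc x.1 x.2
        exact ireach_of_adj (Or.inl ⟨hx2, by omega, by omega⟩)
      · -- odd : route through an even vertex among u1, u2
        by_cases hxw : x.1.val = u1.val + 1
        · obtain ⟨z2, hz2⟩ : ∃ z : ↥S, z.1.val = u2.val := ⟨⟨u2, hu2S⟩, rfl⟩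
          have hne2 := hc u2 hu2S
          exact (ireach_of_adj (x := x) (y := z2)
              (Or.inr ⟨by omega, hx2, by omega⟩)).trans
            (ireach_of_adj (Or.inl ⟨by omega, by omega, by omega⟩))
        · obtain ⟨z1, hz1⟩ : ∃ z : ↥S, z.1.val = u1.val := ⟨⟨u1, hu1S⟩, rfl⟩
          have hne1 := hc u1 hu1S
          exact (ireach_of_adj (x := x) (y := z1)
              (Or.inr ⟨by omega, hx2, by omega⟩)).trans
            (ireach_of_adj (Or.inl ⟨by omega, by omega, by omega⟩))
    -- E3 : no third even vertex
    have hE3 : ∀ w : Fin (2*n), w ∈ S → w.val % 2 = 0 →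
        w.val = u1.val ∨ w.val = u2.val := by
      intro u3 hu3S hu32
      by_contra hc
      push_neg at hc
      obtain ⟨hne1, hne2⟩ := hc
      apply hnpc
      obtain ⟨z1, hz1⟩ : ∃ z : ↥S, z.1.val = v1.val := ⟨⟨v1, hv1S⟩, rfl⟩
      apply hub_pc S z1
      intro x
      rcases Nat.mod_two_eq_zero_or_one x.1.val with hx2 | hx2
      · by_cases hxv : x.1.val = v1.val - 1
        · obtain ⟨u', hu'S, hu'2, hua, hub'⟩ :
              ∃ u', u' ∈ S ∧ u'.val % 2 = 0 ∧ u'.val ≠ v2.val - 1 ∧ u'.val ≠ v1.val - 1 := by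
            by_cases h1 : u1.val ≠ v2.val - 1 ∧ u1.val ≠ v1.val - 1
            · exact ⟨u1, hu1S, hu12, h1.1, h1.2⟩
            · by_cases h2 : u2.val ≠ v2.val - 1 ∧ u2.val ≠ v1.val - 1
              · exact ⟨u2, hu2S, hu22, h2.1, h2.2⟩
              · exact ⟨u3, hu3S, hu32, by omega, by omega⟩
          obtain ⟨zu, hzu⟩ : ∃ z : ↥S, z.1.val = u'.val := ⟨⟨u', hu'S⟩, rfl⟩
          obtain ⟨z2, hz2⟩ : ∃ z : ↥S, z.1.val = v2.val := ⟨⟨v2, hv2S⟩, rfl⟩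
          exact (ireach_of_adj (x := x) (y := z2)
              (Or.inl ⟨hx2, by omega, by omega⟩)).trans
            ((ireach_of_adj (x := z2) (y := zu)
              (Or.inr ⟨by omega, by omega, by omega⟩)).trans
              (ireach_of_adj (Or.inl ⟨by omega, by omega, by omega⟩)))
        · exact ireach_of_adj (Or.inl ⟨hx2, by omega, by omega⟩)
      · by_cases hxv : x.1.val = v1.val
        · exact ireach_of_val_eq (by omega)
        · obtain ⟨u', hu'S, hu'2, hua, hub'⟩ :
              ∃ u', u' ∈ S ∧ u'.val % 2 = 0 ∧ u'.val ≠ x.1.val - 1 ∧ u'.val ≠ v1.val - 1 := by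
            by_cases h1 : u1.val ≠ x.1.val - 1 ∧ u1.val ≠ v1.val - 1
            · exact ⟨u1, hu1S, hu12, h1.1, h1.2⟩
            · by_cases h2 : u2.val ≠ x.1.val - 1 ∧ u2.val ≠ v1.val - 1
              · exact ⟨u2, hu2S, hu22, h2.1, h2.2⟩
              · exact ⟨u3, hu3S, hu32, by omega, by omega⟩
          obtain ⟨zu, hzu⟩ : ∃ z : ↥S, z.1.val = u'.val := ⟨⟨u', hu'S⟩, rfl⟩
          exact (ireach_of_adj (x := x) (y := zu)
              (Or.inr ⟨by omega, hx2, by omega⟩)).trans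
            (ireach_of_adj (Or.inl ⟨by omega, by omega, by omega⟩))
    -- E4 : no third odd vertex
    have hE4 : ∀ w : Fin (2*n), w ∈ S → w.val % 2 = 1 →
        w.val = v1.val ∨ w.val = v2.val := by
      intro v3 hv3S hv32
      by_contra hc
      push_neg at hc
      obtain ⟨hne1, hne2⟩ := hc
      apply hnpc
      obtain ⟨z1, hz1⟩ : ∃ z : ↥S, z.1.val = u1.val := ⟨⟨u1, hu1S⟩, rfl⟩
      apply hub_pc S z1
      intro x
      rcases Nat.mod_two_eq_zero_or_one x.1.val with hx2 | hx2
      · by_cases hxv : x.1.val = u1.val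
        · exact ireach_of_val_eq (by omega)
        · obtain ⟨v', hv'S, hv'2, hva, hvb'⟩ :
              ∃ v', v' ∈ S ∧ v'.val % 2 = 1 ∧ v'.val ≠ x.1.val + 1 ∧ v'.val ≠ u1.val + 1 := by
            by_cases h1 : v1.val ≠ x.1.val + 1 ∧ v1.val ≠ u1.val + 1
            · exact ⟨v1, hv1S, hv12, h1.1, h1.2⟩
            · by_cases h2 : v2.val ≠ x.1.val + 1 ∧ v2.val ≠ u1.val + 1
              · exact ⟨v2, hv2S, hv22, h2.1, h2.2⟩
              · exact ⟨v3, hv3S, hv32, by omega, by omega⟩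
          obtain ⟨zv, hzv⟩ : ∃ z : ↥S, z.1.val = v'.val := ⟨⟨v', hv'S⟩, rfl⟩
          exact (ireach_of_adj (x := x) (y := zv)
              (Or.inl ⟨hx2, by omega, by omega⟩)).trans
            (ireach_of_adj (Or.inr ⟨by omega, by omega, by omega⟩))
      · by_cases hxv : x.1.val = u1.val + 1
        · obtain ⟨v', hv'S, hv'2, hva, hvb'⟩ :
              ∃ v', v' ∈ S ∧ v'.val % 2 = 1 ∧ v'.val ≠ u2.val + 1 ∧ v'.val ≠ u1.val + 1 := by
            by_cases h1 : v1.val ≠ u2.val + 1 ∧ v1.val ≠ u1.val + 1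
            · exact ⟨v1, hv1S, hv12, h1.1, h1.2⟩
            · by_cases h2 : v2.val ≠ u2.val + 1 ∧ v2.val ≠ u1.val + 1
              · exact ⟨v2, hv2S, hv22, h2.1, h2.2⟩
              · exact ⟨v3, hv3S, hv32, by omega, by omega⟩
          obtain ⟨zu2, hzu2⟩ : ∃ z : ↥S, z.1.val = u2.val := ⟨⟨u2, hu2S⟩, rfl⟩
          obtain ⟨zv, hzv⟩ : ∃ z : ↥S, z.1.val = v'.val := ⟨⟨v', hv'S⟩, rfl⟩
          exact (ireach_of_adj (x := x) (y := zu2)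
              (Or.inr ⟨by omega, hx2, by omega⟩)).trans
            ((ireach_of_adj (x := zu2) (y := zv)
              (Or.inl ⟨by omega, by omega, by omega⟩)).trans
              (ireach_of_adj (Or.inr ⟨by omega, by omega, by omega⟩)))
        · exact ireach_of_adj (Or.inr ⟨by omega, hx2, by omega⟩)
    -- assemble : S = {u1, u1+1, u2, u2+1}
    obtain ⟨w1, hw1S, hw1val⟩ := hE1 u1 hu1S hu12
    obtain ⟨w2, hw2S, hw2val⟩ := hE1 u2 hu2S hu22
    have hv1p : v1.val = u1.val + 1 ∨ v1.val = u2.val + 1 := by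
      obtain ⟨p1, hp1S, hp1val⟩ := hE2 v1 hv1S hv12
      have := hE3 p1 hp1S (by omega)
      omega
    have hv2p : v2.val = u1.val + 1 ∨ v2.val = u2.val + 1 := by
      obtain ⟨p2, hp2S, hp2val⟩ := hE2 v2 hv2S hv22
      have := hE3 p2 hp2S (by omega)
      omega
    have hSchar : ∀ x : Fin (2*n), x ∈ S ↔
        (x.val = u1.val ∨ x.val = u1.val + 1 ∨ x.val = u2.val ∨ x.val = u2.val + 1) := by
      intro x
      constructor
      · intro hxS
        rcases Nat.mod_two_eq_zero_or_one x.val with h2 | h2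
        · have := hE3 x hxS h2; omega
        · have := hE4 x hxS h2; omega
      · intro hx
        rcases hx with h | h | h | h
        · rwa [show x = u1 from Fin.ext h]
        · rwa [show x = w1 from Fin.ext (by omega)]
        · rwa [show x = u2 from Fin.ext h]
        · rwa [show x = w2 from Fin.ext (by omega)]
    have hne12 : u1 ≠ u2 := fun h => hu1u2 (congrArg Fin.val h)
    refine ⟨crownX n \ {u1, u2}, Finset.sdiff_subset, ?_, ?_⟩
    · have hsub : {u1, u2} ⊆ crownX n := by
        intro z hz
        rcases Finset.mem_insert.mp hz with rfl | hz
        · exact Finset.mem_filter.mpr ⟨Finset.mem_univ _, hu12⟩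
        · rw [Finset.mem_singleton.mp hz]
          exact Finset.mem_filter.mpr ⟨Finset.mem_univ _, hu22⟩
      rw [Finset.card_sdiff_of_subset hsub, crownX_card, Finset.card_pair hne12]
    · ext x
      rw [mem_sdiff_union_succ_iff u1 u2 hu12 hu22 hu1u2 x]
      constructor
      · intro hxT hx
        exact (hSmem x).mp ((hSchar x).mpr hx) hxT
      · intro hx
        by_contra hxT
        exact hx ((hSchar x).mp ((hSmem x).mpr hxT))
  · rintro ⟨A, hAX, hAcard, hTA⟩
    right
    intro i hiT
    have hBcard : (crownX n \ A).card = 2 := by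
      rw [Finset.card_sdiff_of_subset hAX, crownX_card, hAcard]; omega
    obtain ⟨a, b, hab, hB⟩ := Finset.card_eq_two.mp hBcard
    have haB : a ∈ crownX n \ A := by rw [hB]; simp
    have hbB : b ∈ crownX n \ A := by rw [hB]; simp
    have ha2 : a.val % 2 = 0 := by
      have := (Finset.mem_sdiff.mp haB).1
      simpa [crownX] using this
    have hb2 : b.val % 2 = 0 := by
      have := (Finset.mem_sdiff.mp hbB).1
      simpa [crownX] using this
    have habv : a.val ≠ b.val := fun h => hab (Fin.ext h)
    have ha1lt : a.val + 1 < 2*n := by have := a.isLt; omega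
    have hb1lt : b.val + 1 < 2*n := by have := b.isLt; omega
    have hA' : crownX n \ {a, b} = A := by
      rw [← hB]; exact Finset.sdiff_sdiff_eq_self hAX
    have hmemT : ∀ x : Fin (2*n), x ∈ T ↔
        ¬(x.val = a.val ∨ x.val = a.val+1 ∨ x.val = b.val ∨ x.val = b.val+1) := by
      intro x
      rw [hTA, ← hA']
      exact mem_sdiff_union_succ_iff a b ha2 hb2 habv x
    have hmemS : ∀ x : Fin (2*n), x ∈ ((↑T : Set (Fin (2*n)))ᶜ) ↔
        (x.val = a.val ∨ x.val = a.val+1 ∨ x.val = b.val ∨ x.val = b.val+1) := by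
      intro x
      rw [Set.mem_compl_iff, Finset.mem_coe, hmemT]
      exact not_not
    have hiS : ¬(i.val = a.val ∨ i.val = a.val+1 ∨ i.val = b.val ∨ i.val = b.val+1) :=
      (hmemT i).mp hiT
    have hc2 : numComponents (crownGraph n) ((↑T : Set (Fin (2*n)))ᶜ) = 2 := by
      apply numComponents_eq_two (crownGraph n) _
        (fun x => decide (x.1.val = a.val ∨ x.1.val = b.val + 1))
      · intro x y hxy
        have h' : (crownGraph n).Adj x.1 y.1 := hxy
        rw [crown_adj_iff] at h'
        have hx := (hmemS x.1).mp x.2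
        have hy := (hmemS y.1).mp y.2
        rw [decide_eq_decide]
        omega
      · intro x y hf
        rw [decide_eq_decide] at hf
        have hx := (hmemS x.1).mp x.2
        have hy := (hmemS y.1).mp y.2
        rcases hx with hx|hx|hx|hx <;> rcases hy with hy|hy|hy|hy <;>
          first
            | exact ireach_of_val_eq (by omega)
            | exact ireach_of_adj (Or.inl ⟨by omega, by omega, by omega⟩)
            | exact ireach_of_adj (Or.inr ⟨by omega, by omega, by omega⟩)
      · refine ⟨⟨⟨a.val+1, ha1lt⟩, (hmemS _).mpr (Or.inr (Or.inl rfl))⟩, ?_⟩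
        exact decide_eq_false (show ¬(a.val+1 = a.val ∨ a.val+1 = b.val+1) by omega)
      · refine ⟨⟨a, (hmemS _).mpr (Or.inl rfl)⟩, ?_⟩
        exact decide_eq_true (Or.inl rfl)
    have hc1 : numComponents (crownGraph n) ((↑T : Set (Fin (2*n)))ᶜ ∪ {i}) = 1 := by
      apply numComponents_eq_one_s3 (crownGraph n) _ ⟨i, Or.inr rfl⟩
      obtain ⟨z, hz⟩ : ∃ z : ↥((↑T : Set (Fin (2*n)))ᶜ ∪ {i}), z.1.val = i.val :=
        ⟨⟨i, Or.inr rfl⟩, rfl⟩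
      obtain ⟨wa, hwa⟩ : ∃ w : ↥((↑T : Set (Fin (2*n)))ᶜ ∪ {i}), w.1.val = a.val + 1 :=
        ⟨⟨⟨a.val+1, ha1lt⟩, Or.inl ((hmemS _).mpr (Or.inr (Or.inl rfl)))⟩, rfl⟩
      obtain ⟨wb, hwb⟩ : ∃ w : ↥((↑T : Set (Fin (2*n)))ᶜ ∪ {i}), w.1.val = b.val + 1 :=
        ⟨⟨⟨b.val+1, hb1lt⟩, Or.inl ((hmemS _).mpr (Or.inr (Or.inr (Or.inr rfl))))⟩, rfl⟩
      obtain ⟨ua, hua⟩ : ∃ w : ↥((↑T : Set (Fin (2*n)))ᶜ ∪ {i}), w.1.val = a.val :=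
        ⟨⟨a, Or.inl ((hmemS _).mpr (Or.inl rfl))⟩, rfl⟩
      obtain ⟨ub, hub⟩ : ∃ w : ↥((↑T : Set (Fin (2*n)))ᶜ ∪ {i}), w.1.val = b.val :=
        ⟨⟨b, Or.inl ((hmemS _).mpr (Or.inr (Or.inr (Or.inl rfl))))⟩, rfl⟩
      have hhub : ∀ x : ↥((↑T : Set (Fin (2*n)))ᶜ ∪ {i}),
          ((crownGraph n).induce _).Reachable x z := by
        intro x
        have hx : (x.1.val = a.val ∨ x.1.val = a.val+1 ∨ x.1.val = b.val ∨ x.1.val = b.val+1)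
            ∨ x.1.val = i.val := by
          have h := x.2
          rw [Set.mem_union, Set.mem_singleton_iff] at h
          rcases h with h | h
          · exact Or.inl ((hmemS x.1).mp h)
          · exact Or.inr (congrArg Fin.val h)
        rcases Nat.mod_two_eq_zero_or_one i.val with hi2 | hi2
        · -- i even
          rcases hx with (hx|hx|hx|hx)|hx
          · exact (ireach_of_adj (x := x) (y := wb)
              (Or.inl ⟨by omega, by omega, by omega⟩)).trans
              (ireach_of_adj (Or.inr ⟨by omega, by omega, by omega⟩))
          · exact ireach_of_adj (Or.inr ⟨by omega, by omega, by omega⟩)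
          · exact (ireach_of_adj (x := x) (y := wa)
              (Or.inl ⟨by omega, by omega, by omega⟩)).trans
              (ireach_of_adj (Or.inr ⟨by omega, by omega, by omega⟩))
          · exact ireach_of_adj (Or.inr ⟨by omega, by omega, by omega⟩)
          · exact ireach_of_val_eq (by omega)
        · -- i odd
          rcases hx with (hx|hx|hx|hx)|hx
          · exact ireach_of_adj (Or.inl ⟨by omega, by omega, by omega⟩)
          · exact (ireach_of_adj (x := x) (y := ub)
              (Or.inr ⟨by omega, by omega, by omega⟩)).trans
              (ireach_of_adj (Or.inl ⟨by omega, by omega, by omega⟩))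
          · exact ireach_of_adj (Or.inl ⟨by omega, by omega, by omega⟩)
          · exact (ireach_of_adj (x := x) (y := ua)
              (Or.inr ⟨by omega, by omega, by omega⟩)).trans
              (ireach_of_adj (Or.inl ⟨by omega, by omega, by omega⟩))
          · exact ireach_of_val_eq (by omega)
      intro x y
      exact (hhub x).trans (hhub y).symm
    rw [hc1, hc2]
    omega
end

section
/- Let n ≥ 3 and G = C_{n,n}. If T = X \ {2i-1} for some i ∈ [n], where X is the set of odd vertices, then the induced subgraph of G on [2n] \ T has exactly two connected components. -/
open SimpleGraph

theorem crown_components_erase (n : ℕ) (hn : 3 ≤ n) (v : Fin (2 * n)) (hv : v ∈ crownX n) :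
    numComponents (crownGraph n) ((↑((crownX n).erase v) : Set (Fin (2 * n)))ᶜ) = 2 := by
  classical
  have hv0 : v.val % 2 = 0 := by
    simpa [crownX] using hv
  set s : Set (Fin (2 * n)) := (↑((crownX n).erase v) : Set (Fin (2 * n)))ᶜ with hs
  have hmem : ∀ w : Fin (2 * n), w ∈ s ↔ (w = v ∨ w.val % 2 = 1) := by
    intro w
    simp only [hs, Set.mem_compl_iff, Finset.coe_erase, Set.mem_diff, Finset.mem_coe,
      crownX, Finset.mem_filter, Finset.mem_univ, true_and, Set.mem_singleton_iff]
    constructor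
    · intro h
      by_cases hw : w = v
      · exact Or.inl hw
      · right; omega
    · rintro (rfl | h) <;> omega
  have hvs : v ∈ s := (hmem v).2 (Or.inl rfl)
  have hv1lt : v.val + 1 < 2 * n := by
    have := v.isLt; omega
  set v1 : Fin (2 * n) := ⟨v.val + 1, hv1lt⟩ with hv1
  have hv1s : v1 ∈ s := (hmem v1).2 (Or.inr (by simp [hv1]; omega))
  -- the coloring map
  let f : s → Bool := fun w => decide (w.1.val = v.val + 1)
  have hf : ∀ (a b : s), ((crownGraph n).induce s).Adj a b → f a = f b := by
    rintro ⟨a, ha⟩ ⟨b, hb⟩ hab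
    have hab' : (crownGraph n).Adj a b := hab
    rcases hab' with ⟨h1, h2, h3⟩ | ⟨h1, h2, h3⟩
    · -- a even, b odd
      have hav : a = v := by
        rcases (hmem a).1 ha with h | h
        · exact h
        · omega
      subst hav
      simp only [f, decide_eq_decide]
      omega
    · have hbv : b = v := by
        rcases (hmem b).1 hb with h | h
        · exact h
        · omega
      subst hbv
      simp only [f, decide_eq_decide]
      omega
  let φ : ((crownGraph n).induce s).ConnectedComponent → Bool :=
    ConnectedComponent.lift f (fun a b p _ => p.rec rfl (fun h _ ih => (hf _ _ h).trans ih))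
  -- every vertex with f = false is adjacent or equal to v
  have hreach : ∀ a : s, f a = false →
      ((crownGraph n).induce s).Reachable a ⟨v, hvs⟩ := by
    rintro ⟨a, ha⟩ hfa
    have hane : a.val ≠ v.val + 1 := by simpa [f] using hfa
    rcases (hmem a).1 ha with h | h
    · subst h; exact Reachable.refl _
    · -- a odd, adjacent to v
      have hadj : ((crownGraph n).induce s).Adj ⟨a, ha⟩ ⟨v, hvs⟩ := by
        show (crownGraph n).Adj a v
        exact Or.inr ⟨hv0, h, hane⟩
      exact hadj.reachable
  have hbij : Function.Bijective φ := by
    constructor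
    · intro c d
      refine ConnectedComponent.ind₂ (fun a b hab => ?_) c d
      have hφa : φ (((crownGraph n).induce s).connectedComponentMk a) = f a := rfl
      have hφb : φ (((crownGraph n).induce s).connectedComponentMk b) = f b := rfl
      rw [hφa, hφb] at hab
      rcases hb : f b with _ | _
      · have hfa : f a = false := by rw [hab, hb]
        exact (ConnectedComponent.sound (hreach a hfa)).trans
          (ConnectedComponent.sound (hreach b hb)).symm
      · have hfa : f a = true := by rw [hab, hb]
        have h1 : a.1.val = v.val + 1 := by simpa [f] using hfa
        have h2 : b.1.val = v.val + 1 := by simpa [f] using hb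
        have : a = b := Subtype.ext (Fin.ext (h1.trans h2.symm))
        rw [this]
    · intro b
      rcases b with _ | _
      · refine ⟨((crownGraph n).induce s).connectedComponentMk ⟨v, hvs⟩, ?_⟩
        show f ⟨v, hvs⟩ = false
        simp [f]
      · refine ⟨((crownGraph n).induce s).connectedComponentMk ⟨v1, hv1s⟩, ?_⟩
        show f ⟨v1, hv1s⟩ = true
        simp [f, hv1]
  have : Nat.card (((crownGraph n).induce s).ConnectedComponent) = Nat.card Bool :=
    Nat.card_congr (Equiv.ofBijective φ hbij)
  simpa [numComponents, Nat.card_eq_fintype_card] using this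
end
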